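/- Let X be a K3 surface with Picard lattice generated by A, E1,...,E5 with Gram matrix [[0,1,0,0,0,0],[1,-2,0,0,0,0],[0,0,-2,0,0,0],[0,0,0,-2,0,0],[0,0,0,0,-2,0],[0,0,0,0,0,-2]]. Let a, b be integers with a + b ≥ 9 and b ≡ 0 (mod 3). Set δ = 3 + 3⌊a/3⌋ - a, M1 = ((a+9+δ)/3) A + 3 E1 - (E3 + ... + E_{δ+2}), and M2 = (b/3) A - E2. Then M1² = 2a, M1·M2 = b, M2² = -2, and M1 + M2 satisfies the nef inequalities: writing M1 + M2 = dA + m1 E1 - Σ_{i≥2} mi Ei one has d ≥ 2m1 ≥ 4 mi ≥ 0 for i ≥ 2, (M1+M2)·A ≥ 3, and (M1+M2)·E5 ≤ 2. -/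

import Mathlib

section
variable (x0 x1 x2 x3 x4 x5 : ℤ)
lemma vec6_0 : ![x0,x1,x2,x3,x4,x5] 0 = x0 := rfl
lemma vec6_1 : ![x0,x1,x2,x3,x4,x5] 1 = x1 := rfl
lemma vec6_2 : ![x0,x1,x2,x3,x4,x5] 2 = x2 := rfl
lemma vec6_3 : ![x0,x1,x2,x3,x4,x5] 3 = x3 := rfl
lemma vec6_4 : ![x0,x1,x2,x3,x4,x5] 4 = x4 := rfl
lemma vec6_5 : ![x0,x1,x2,x3,x4,x5] 5 = x5 := rfl
end

/-- The bilinear form of the rank-6 lattice with Gram matrix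
`[[0,1],[1,-2]] ⊕ ⟨-2⟩⁴` in the basis `A, E1, ..., E5`. -/
def form6 (u v : Fin 6 → ℤ) : ℤ :=
  u 0 * v 1 + u 1 * v 0 -
    2 * (u 1 * v 1 + u 2 * v 2 + u 3 * v 3 + u 4 * v 4 + u 5 * v 5)

/-- Case `b ≡ 0 (mod 3)` of the explicit embedding in Theorem 3.1 A3: with
`δ = 3 + 3⌊a/3⌋ - a`, `M1 = ((a+9+δ)/3)A + 3E1 - (E3 + ... + E_{δ+2})` and
`M2 = (b/3)A - E2` satisfy `M1² = 2a`, `M1·M2 = b`, `M2² = -2`, and `L = M1+M2`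
satisfies the nef inequalities `d ≥ 2m1 ≥ 4mi ≥ 0`, `L·A ≥ 3`, `L·E5 ≤ 2`. -/
theorem stmt_15 (a b δ : ℤ) (ha : 0 < a) (hab : 9 ≤ a + b) (hb3 : 3 ∣ b)
    (hδ : δ = 3 + 3 * (a / 3) - a)
    (M1 M2 : Fin 6 → ℤ)
    (hM1 : M1 = ![(a + 9 + δ) / 3, 3, 0,
        if 1 ≤ δ then -1 else 0, if 2 ≤ δ then -1 else 0, if 3 ≤ δ then -1 else 0])
    (hM2 : M2 = ![b / 3, 0, -1, 0, 0, 0]) :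
    form6 M1 M1 = 2 * a ∧ form6 M1 M2 = b ∧ form6 M2 M2 = -2 ∧
    2 * (M1 + M2) 1 ≤ (M1 + M2) 0 ∧
    (∀ i : Fin 6, 2 ≤ (i : ℕ) →
      4 * (-(M1 + M2) i) ≤ 2 * (M1 + M2) 1 ∧ 0 ≤ -(M1 + M2) i) ∧
    3 ≤ form6 (M1 + M2) (Pi.single 0 1) ∧
    form6 (M1 + M2) (Pi.single 5 1) ≤ 2 := by
  obtain ⟨c, rfl⟩ := hb3
  subst hδ hM1 hM2
  have h0 : Pi.single (0 : Fin 6) (1:ℤ) = ![1,0,0,0,0,0] := by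
    funext i; fin_cases i <;> rfl
  have h5 : Pi.single (5 : Fin 6) (1:ℤ) = ![0,0,0,0,0,1] := by
    funext i; fin_cases i <;> rfl
  refine ⟨?_, ?_, ?_, ?_, ?_, ?_, ?_⟩
  · simp only [form6, vec6_0, vec6_1, vec6_2, vec6_3, vec6_4, vec6_5]
    split_ifs <;> omega
  · simp only [form6, vec6_0, vec6_1, vec6_2, vec6_3, vec6_4, vec6_5]
    split_ifs <;> ring_nf <;> omega
  · simp only [form6, vec6_0, vec6_1, vec6_2, vec6_3, vec6_4, vec6_5]; ring
  · simp only [Pi.add_apply, vec6_0, vec6_1]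
    omega
  · intro i hi
    fin_cases i <;> norm_num at hi <;> norm_num <;> split_ifs <;> omega
  · simp only [form6, Pi.add_apply, h0, vec6_0, vec6_1, vec6_2, vec6_3, vec6_4, vec6_5]
    split_ifs <;> omega
  · simp only [form6, Pi.add_apply, h5, vec6_0, vec6_1, vec6_2, vec6_3, vec6_4, vec6_5]
    split_ifs <;> omega
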